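/- Let G be a closed abelian subgroup of Isom(ℝ^k) and let G_∞ be the set of all limits, as λ_i → 0, of dilation-conjugates D_{λ_i} g_i D_{λ_i}^{-1} with g_i ∈ G. Then G_∞ is a closed subgroup of Isom(ℝ^k) containing the isotropy subgroup Iso₀G, and if G does not satisfy property (P) then Iso₀G is a proper subgroup of Iso₀G_∞. -/

import Mathlib

open Filter

/-- `ℝ^k` with the Euclidean metric. -/
noncomputable abbrev E (k : ℕ) := EuclideanSpace ℝ (Fin k)

/-- The isometry `x ↦ A x + v` of `ℝ^k`, i.e. the element `(A, v)` of
`Isom(ℝ^k) = ℝ^k ⋊ O(k)`. -/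
noncomputable def aff {k : ℕ} (A : E k ≃ₗᵢ[ℝ] E k) (v : E k) : E k ≃ᵢ E k :=
  A.toIsometryEquiv.trans (IsometryEquiv.addLeft v)

/-- Topology of pointwise convergence on the isometry group of `ℝ^k`
(equivalently, of uniform convergence on compact sets). -/
noncomputable instance {k : ℕ} : TopologicalSpace (E k ≃ᵢ E k) :=
  TopologicalSpace.induced (fun g => (g : E k → E k)) Pi.topologicalSpace

/-- The blow-down limit set `G_∞` of `G ≤ Isom(ℝ^k)`: all limits, as `λᵢ → 0⁺`, of
dilation-conjugates `D_{λᵢ} gᵢ D_{λᵢ}^{-1}` of elements `gᵢ = (Aᵢ, vᵢ) ∈ G` (the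
conjugate of `(A, v)` by `D_λ` being `(A, λ v)`). -/
def Ginf {k : ℕ} (G : Subgroup (E k ≃ᵢ E k)) : Set (E k ≃ᵢ E k) :=
  {h | ∃ (s : ℕ → ℝ) (As : ℕ → (E k ≃ₗᵢ[ℝ] E k)) (vs : ℕ → E k),
    (∀ n, aff (As n) (vs n) ∈ G) ∧ (∀ n, 0 < s n) ∧
    Tendsto s atTop (nhds 0) ∧
    Tendsto (fun n => aff (As n) (s n • vs n)) atTop (nhds h)}

set_option maxHeartbeats 1000000

namespace St14
variable {k : ℕ}

@[simp] lemma aff_apply (A : E k ≃ₗᵢ[ℝ] E k) (v x : E k) : aff A v x = v + A x := rfl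

lemma aff_injective {A B : E k ≃ₗᵢ[ℝ] E k} {v w : E k} (h : aff A v = aff B w) :
    A = B ∧ v = w := by
  have h0 : v = w := by simpa using congrArg (fun f => f 0) h
  subst h0
  refine ⟨LinearIsometryEquiv.ext fun x => ?_, rfl⟩
  have := congrArg (fun f => f x) h
  simpa using this

lemma aff_mul (A B : E k ≃ₗᵢ[ℝ] E k) (v w : E k) :
    aff A v * aff B w = aff (B.trans A) (v + A w) := by
  ext x
  simp [IsometryEquiv.mul_apply, add_assoc]

lemma aff_one : (1 : E k ≃ᵢ E k) = aff 1 0 := by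
  ext x; simp [LinearIsometryEquiv.one_def]

lemma aff_inv (A : E k ≃ₗᵢ[ℝ] E k) (v : E k) :
    (aff A v)⁻¹ = aff A.symm (-(A.symm v)) := by
  rw [eq_comm, eq_inv_iff_mul_eq_one, aff_mul, aff_one]
  congr 1
  · exact A.self_trans_symm
  · simp

lemma exists_aff (h : E k ≃ᵢ E k) : ∃ (A : E k ≃ₗᵢ[ℝ] E k) (v : E k), h = aff A v := by
  refine ⟨h.toRealLinearIsometryEquiv, h 0, ?_⟩
  ext x
  simp [IsometryEquiv.toRealLinearIsometryEquiv_apply]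

lemma tendsto_iff {f : ℕ → E k ≃ᵢ E k} {h : E k ≃ᵢ E k} :
    Tendsto f atTop (nhds h) ↔ ∀ x, Tendsto (fun n => f n x) atTop (nhds (h x)) := by
  rw [show (nhds h) = comap (fun g : E k ≃ᵢ E k => (g : E k → E k)) (nhds (h : E k → E k)) from
    nhds_induced _ _, tendsto_comap_iff, tendsto_pi_nhds]
  rfl

lemma continuous_eval (x : E k) : Continuous (fun g : E k ≃ᵢ E k => g x) :=
  (continuous_apply x).comp continuous_induced_dom

end St14

section S2
open Filter
namespace St14
variable {k : ℕ} (G : Subgroup (E k ≃ᵢ E k))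

/-- witness predicate -/
def W (L : E k ≃ₗᵢ[ℝ] E k) (c : E k) : Prop :=
  ∃ (s : ℕ → ℝ) (As : ℕ → (E k ≃ₗᵢ[ℝ] E k)) (vs : ℕ → E k),
    (∀ n, aff (As n) (vs n) ∈ G) ∧ (∀ n, 0 < s n) ∧
    Tendsto s atTop (nhds 0) ∧
    (∀ x, Tendsto (fun n => As n x) atTop (nhds (L x))) ∧
    Tendsto (fun n => s n • vs n) atTop (nhds c)

variable {G}

lemma tendsto_smul_zero_of_bounded {s : ℕ → ℝ} {y : ℕ → E k} {C : ℝ}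
    (hs : Tendsto s atTop (nhds 0)) (hy : ∀ n, ‖y n‖ ≤ C) :
    Tendsto (fun n => s n • y n) atTop (nhds 0) := by
  refine squeeze_zero_norm (fun n => ?_) (by simpa using (hs.abs).mul_const C)
  rw [norm_smul, Real.norm_eq_abs]
  exact mul_le_mul_of_nonneg_left (hy n) (abs_nonneg _)

lemma ginf_iff {L : E k ≃ₗᵢ[ℝ] E k} {c : E k} : aff L c ∈ Ginf G ↔ W G L c := by
  constructor
  · rintro ⟨s, As, vs, h1, h2, h3, h4⟩
    rw [tendsto_iff] at h4
    have h0 : Tendsto (fun n => s n • vs n) atTop (nhds c) := by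
      have := h4 0
      simpa using this
    refine ⟨s, As, vs, h1, h2, h3, fun x => ?_, h0⟩
    have := (h4 x).sub h0
    simp only [aff_apply] at this
    simpa [add_sub_cancel_left] using this
  · rintro ⟨s, As, vs, h1, h2, h3, h4, h5⟩
    refine ⟨s, As, vs, h1, h2, h3, ?_⟩
    rw [tendsto_iff]
    intro x
    simpa [aff_apply] using h5.add (h4 x)

lemma W.ginf {L : E k ≃ₗᵢ[ℝ] E k} {c : E k} (h : W G L c) : aff L c ∈ Ginf G := ginf_iff.2 h

lemma tendsto_pt_of_dense {q : ℕ → E k} (hq : DenseRange q) {f : ℕ → E k ≃ᵢ E k}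
    {h : E k ≃ᵢ E k}
    (H : ∀ i, Tendsto (fun n => dist (f n (q i)) (h (q i))) atTop (nhds 0)) :
    ∀ x, Tendsto (fun n => f n x) atTop (nhds (h x)) := by
  intro x
  rw [tendsto_iff_dist_tendsto_zero]
  rw [Metric.tendsto_atTop]
  intro ε hε
  obtain ⟨i, hi⟩ := hq.exists_dist_lt x (by linarith : (0:ℝ) < ε/3)
  have := (Metric.tendsto_atTop.1 (H i)) (ε/3) (by linarith)
  obtain ⟨N, hN⟩ := this
  refine ⟨N, fun n hn => ?_⟩
  have h1 : dist (f n x) (f n (q i)) = dist x (q i) := (f n).isometry.dist_eq _ _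
  have h2 : dist (h (q i)) (h x) = dist (q i) x := h.isometry.dist_eq _ _
  have h3 := hN n hn
  rw [Real.dist_eq, sub_zero, abs_of_nonneg dist_nonneg] at h3 ⊢
  have h4 : dist (f n x) (h x) ≤ dist (f n x) (f n (q i)) + dist (f n (q i)) (h (q i))
        + dist (h (q i)) (h x) := dist_triangle4 _ _ _ _
  rw [h1, h2] at h4
  have h5 : dist (q i) x = dist x (q i) := dist_comm _ _
  rw [h5] at h4
  linarith

lemma isClosed_Ginf : IsClosed (Ginf G) := by
  rw [← closure_subset_iff_isClosed]
  intro h hh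
  obtain ⟨q, hq⟩ := TopologicalSpace.exists_dense_seq (E k)
  -- choose approximants from Ginf
  have hex : ∀ n : ℕ, ∃ g, g ∈ Ginf G ∧ ∀ i ≤ n, dist (g (q i)) (h (q i)) < 1/(n+1) := by
    intro n
    have hopen : IsOpen (⋂ i ∈ Finset.range (n+1),
        (fun g : E k ≃ᵢ E k => g (q i)) ⁻¹' Metric.ball (h (q i)) (1/(n+1))) :=
      isOpen_biInter_finset fun i _ => (Metric.isOpen_ball).preimage (continuous_eval (q i))
    have hmem : h ∈ ⋂ i ∈ Finset.range (n+1),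
        (fun g : E k ≃ᵢ E k => g (q i)) ⁻¹' Metric.ball (h (q i)) (1/(n+1)) := by
      simp only [Set.mem_iInter, Set.mem_preimage, Metric.mem_ball, dist_self]
      intro i _
      positivity
    obtain ⟨g, hg1, hg2⟩ := (_root_.mem_closure_iff.1 hh) _ hopen hmem
    simp only [Set.mem_iInter, Set.mem_preimage, Metric.mem_ball, Finset.mem_range] at hg1
    exact ⟨g, hg2, fun i hi => hg1 i (Nat.lt_succ_of_le hi)⟩
  choose f hf1 hf2 using hex
  have one_div_tendsto : Tendsto (fun n : ℕ => 1/((n:ℝ)+1)) atTop (nhds 0) :=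
    tendsto_one_div_add_atTop_nhds_zero_nat
  have claimA : ∀ i, Tendsto (fun n => dist (f n (q i)) (h (q i))) atTop (nhds 0) := by
    intro i
    apply squeeze_zero' (Eventually.of_forall fun n => dist_nonneg)
      (g := fun n : ℕ => 1/((n:ℝ)+1)) _ one_div_tendsto
    filter_upwards [eventually_ge_atTop i] with n hn
    exact le_of_lt (hf2 n i hn)
  -- diagonalize witnesses
  have hdiag : ∀ n : ℕ, ∃ (σ : ℝ) (A : E k ≃ₗᵢ[ℝ] E k) (v : E k),
      aff A v ∈ G ∧ 0 < σ ∧ σ < 1/(n+1) ∧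
      ∀ i ≤ n, dist (aff A (σ • v) (q i)) (f n (q i)) < 1/(n+1) := by
    intro n
    obtain ⟨s, As, vs, w1, w2, w3, w4⟩ := hf1 n
    rw [tendsto_iff] at w4
    have e1 : ∀ᶠ m in atTop, s m < 1/(n+1) :=
      w3.eventually (gt_mem_nhds (by positivity))
    have e2 : ∀ᶠ m in atTop, ∀ i ∈ Finset.range (n+1),
        dist (aff (As m) (s m • vs m) (q i)) (f n (q i)) < 1/(n+1) := by
      rw [eventually_all_finset]
      intro i _
      have := (w4 (q i))
      have : Tendsto (fun m => dist (aff (As m) (s m • vs m) (q i)) (f n (q i)))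
          atTop (nhds 0) := tendsto_iff_dist_tendsto_zero.1 this
      exact this.eventually (gt_mem_nhds (by positivity))
    obtain ⟨m, hm1, hm2⟩ := (e1.and e2).exists
    exact ⟨s m, As m, vs m, w1 m, w2 m, hm1,
      fun i hi => hm2 i (Finset.mem_range.2 (Nat.lt_succ_of_le hi))⟩
  choose σ A v hm hpos hlt happ using hdiag
  refine ⟨σ, A, v, hm, hpos, ?_, ?_⟩
  · apply squeeze_zero' (Eventually.of_forall fun n => (hpos n).le)
      (g := fun n : ℕ => 1/((n:ℝ)+1)) (Eventually.of_forall fun n => (hlt n).le)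
      one_div_tendsto
  · rw [tendsto_iff]
    apply tendsto_pt_of_dense hq
    intro i
    apply squeeze_zero' (Eventually.of_forall fun n => dist_nonneg)
      (g := fun n : ℕ => 1/((n:ℝ)+1) + dist (f n (q i)) (h (q i)))
    · filter_upwards [eventually_ge_atTop i] with n hn
      calc dist (aff (A n) (σ n • v n) (q i)) (h (q i))
          ≤ dist (aff (A n) (σ n • v n) (q i)) (f n (q i)) + dist (f n (q i)) (h (q i)) :=
            dist_triangle _ _ _
        _ ≤ 1/((n:ℝ)+1) + dist (f n (q i)) (h (q i)) := by
            gcongr; exact (happ n i hn).le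
    · simpa using one_div_tendsto.add (claimA i)

end St14
end S2

section S3
open Filter
namespace St14
variable {k : ℕ} {G : Subgroup (E k ≃ᵢ E k)}

lemma one_div_nat_tendsto : Tendsto (fun n : ℕ => 1/((n:ℝ)+1)) atTop (nhds 0) :=
  tendsto_one_div_add_atTop_nhds_zero_nat

lemma W_one : W G 1 0 := by
  refine ⟨fun n => 1/((n:ℝ)+1), fun _ => 1, fun _ => 0, fun n => ?_, fun n => by positivity,
    one_div_nat_tendsto, fun x => by simp, by simp⟩
  rw [← aff_one]
  exact G.one_mem

lemma W.zero {L : E k ≃ₗᵢ[ℝ] E k} {c : E k} (h : W G L c) : W G L 0 := by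
  obtain ⟨s, As, vs, h1, h2, h3, h4, h5⟩ := h
  refine ⟨fun n => s n * s n, As, vs, h1, fun n => mul_pos (h2 n) (h2 n),
    by simpa using h3.mul h3, h4, ?_⟩
  have := h3.smul h5
  simp only [mul_smul]
  simpa using this

lemma W.smulpos {L : E k ≃ₗᵢ[ℝ] E k} {c : E k} (h : W G L c) {r : ℝ} (hr : 0 < r) :
    W G L (r • c) := by
  obtain ⟨s, As, vs, h1, h2, h3, h4, h5⟩ := h
  refine ⟨fun n => r * s n, As, vs, h1, fun n => mul_pos hr (h2 n),
    by simpa using h3.const_mul r, h4, ?_⟩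
  simp only [mul_smul]
  exact h5.const_smul r

lemma tendsto_symm_apply {As : ℕ → (E k ≃ₗᵢ[ℝ] E k)} {L : E k ≃ₗᵢ[ℝ] E k}
    (h4 : ∀ x, Tendsto (fun n => As n x) atTop (nhds (L x)))
    {y : ℕ → E k} {c : E k} (hy : Tendsto y atTop (nhds c)) :
    Tendsto (fun n => (As n).symm (y n)) atTop (nhds (L.symm c)) := by
  rw [tendsto_iff_norm_sub_tendsto_zero]
  have key : ∀ n, ‖(As n).symm (y n) - L.symm c‖ ≤ ‖y n - c‖ + ‖As n (L.symm c) - c‖ := by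
    intro n
    have t1 : ‖(As n).symm (y n) - (As n).symm c‖ = ‖y n - c‖ := by
      rw [← map_sub, (As n).symm.norm_map]
    have t2 : ‖(As n).symm c - L.symm c‖ = ‖As n (L.symm c) - c‖ := by
      rw [← (As n).norm_map ((As n).symm c - L.symm c), map_sub,
        (As n).apply_symm_apply, norm_sub_rev]
    calc ‖(As n).symm (y n) - L.symm c‖
        ≤ ‖(As n).symm (y n) - (As n).symm c‖ + ‖(As n).symm c - L.symm c‖ :=
          norm_sub_le_norm_sub_add_norm_sub _ _ _
      _ = ‖y n - c‖ + ‖As n (L.symm c) - c‖ := by rw [t1, t2]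
  refine squeeze_zero_norm (fun n => by simpa using key n) ?_
  have a1 : Tendsto (fun n => ‖y n - c‖) atTop (nhds 0) :=
    tendsto_iff_norm_sub_tendsto_zero.1 hy
  have a2 : Tendsto (fun n => ‖As n (L.symm c) - c‖) atTop (nhds 0) := by
    have := tendsto_iff_norm_sub_tendsto_zero.1 (h4 (L.symm c))
    simpa [L.apply_symm_apply] using this
  simpa using a1.add a2

lemma W.inv {L : E k ≃ₗᵢ[ℝ] E k} {c : E k} (h : W G L c) :
    W G L.symm (-(L.symm c)) := by
  obtain ⟨s, As, vs, h1, h2, h3, h4, h5⟩ := h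
  refine ⟨s, fun n => (As n).symm, fun n => -((As n).symm (vs n)), fun n => ?_, h2, h3,
    fun x => ?_, ?_⟩
  · rw [← aff_inv]
    exact G.inv_mem (h1 n)
  · exact tendsto_symm_apply h4 tendsto_const_nhds
  · have := tendsto_symm_apply h4 h5
    have : Tendsto (fun n => -((As n).symm (s n • vs n))) atTop (nhds (-(L.symm c))) :=
      this.neg
    simpa [map_smul, smul_neg] using this

lemma W.compR_elem {L' : E k ≃ₗᵢ[ℝ] E k} {c : E k} (h : W G L' c)
    {B : E k ≃ₗᵢ[ℝ] E k} {w : E k} (hB : aff B w ∈ G) : W G (B.trans L') c := by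
  obtain ⟨s, As, vs, h1, h2, h3, h4, h5⟩ := h
  refine ⟨s, fun n => B.trans (As n), fun n => vs n + As n w, fun n => ?_, h2, h3,
    fun x => h4 (B x), ?_⟩
  · rw [← aff_mul]
    exact G.mul_mem (h1 n) hB
  · have hb : Tendsto (fun n => s n • (As n w)) atTop (nhds 0) :=
      tendsto_smul_zero_of_bounded h3 (fun n => by rw [(As n).norm_map])
    simpa [smul_add] using h5.add hb

lemma W.compL_elem {L' : E k ≃ₗᵢ[ℝ] E k} {c' : E k} (h : W G L' c')
    {A : E k ≃ₗᵢ[ℝ] E k} {w : E k} (hA : aff A w ∈ G) : W G (L'.trans A) (A c') := by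
  obtain ⟨s, As, vs, h1, h2, h3, h4, h5⟩ := h
  refine ⟨s, fun n => (As n).trans A, fun n => w + A (vs n), fun n => ?_, h2, h3,
    fun x => ?_, ?_⟩
  · rw [← aff_mul]
    exact G.mul_mem hA (h1 n)
  · exact (A.continuous.tendsto _).comp (h4 x)
  · have hb : Tendsto (fun n => s n • w) atTop (nhds 0) := by
      simpa using h3.smul (tendsto_const_nhds (x := w))
    have hc : Tendsto (fun n => A (s n • vs n)) atTop (nhds (A c')) :=
      (A.continuous.tendsto _).comp h5
    have := hb.add hc
    simp only [smul_add, map_smul]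
    simpa using this

lemma W.closed {Ls : ℕ → (E k ≃ₗᵢ[ℝ] E k)} {cs : ℕ → E k} {L : E k ≃ₗᵢ[ℝ] E k} {c : E k}
    (hW : ∀ j, W G (Ls j) (cs j))
    (hL : ∀ x, Tendsto (fun j => Ls j x) atTop (nhds (L x)))
    (hc : Tendsto cs atTop (nhds c)) : W G L c := by
  rw [← ginf_iff]
  have htend : Tendsto (fun j => aff (Ls j) (cs j)) atTop (nhds (aff L c)) := by
    rw [tendsto_iff]
    intro x
    simpa [aff_apply] using hc.add (hL x)
  exact isClosed_Ginf.mem_of_tendsto htend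
    (Eventually.of_forall fun j => (hW j).ginf)

lemma W.compL {L L' : E k ≃ₗᵢ[ℝ] E k} {c₀ c : E k} (h : W G L c₀) (h' : W G L' c) :
    W G (L'.trans L) (L c) := by
  obtain ⟨s, As, vs, h1, h2, h3, h4, h5⟩ := h
  refine W.closed (Ls := fun n => L'.trans (As n)) (cs := fun n => As n c)
    (fun n => h'.compL_elem (h1 n)) (fun x => h4 (L' x)) (h4 c)

lemma W.compR {L L' : E k ≃ₗᵢ[ℝ] E k} {c c₀ : E k} (h' : W G L' c) (h : W G L c₀) :
    W G (L.trans L') c := by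
  obtain ⟨s, As, vs, h1, h2, h3, h4, h5⟩ := h
  refine W.closed (Ls := fun n => (As n).trans L') (cs := fun _ => c)
    (fun n => h'.compR_elem (h1 n)) (fun x => ?_) tendsto_const_nhds
  -- L' ((As n) x) → L' (L x)
  exact (L'.continuous.tendsto _).comp (h4 x)

lemma W.mul (Wadd : ∀ d₁ d₂ : E k, W G 1 d₁ → W G 1 d₂ → W G 1 (d₁ + d₂))
    {L₁ L₂ : E k ≃ₗᵢ[ℝ] E k} {c₁ c₂ : E k}
    (hx : W G L₁ c₁) (hy : W G L₂ c₂) : W G (L₂.trans L₁) (c₁ + L₁ c₂) := by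
  set M := L₂.trans L₁ with hM
  have e₁ : W G M c₁ := hx.compR hy
  have e₂ : W G M (L₁ c₂) := hx.compL hy
  have e₃ : W G M.symm (-(M.symm c₁)) := e₁.inv
  have hrefl : M.trans M.symm = (1 : E k ≃ₗᵢ[ℝ] E k) := M.self_trans_symm
  have g₁ : W G 1 (M.symm c₁) := by
    have := e₃.compL e₁
    rwa [hrefl] at this
  have g₂ : W G 1 (M.symm (L₁ c₂)) := by
    have := e₃.compL e₂
    rwa [hrefl] at this
  have gsum : W G 1 (M.symm c₁ + M.symm (L₁ c₂)) := Wadd _ _ g₁ g₂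
  have final := e₁.compL gsum
  have h1M : (1 : E k ≃ₗᵢ[ℝ] E k).trans M = M := LinearIsometryEquiv.refl_trans M
  rw [h1M] at final
  have : M (M.symm c₁ + M.symm (L₁ c₂)) = c₁ + L₁ c₂ := by
    rw [map_add, M.apply_symm_apply, M.apply_symm_apply]
  rwa [this] at final

end St14
end S3

section S4
open Filter
namespace St14
variable {k : ℕ} {G : Subgroup (E k ≃ᵢ E k)}

lemma eigenfix (habel : ∀ a ∈ G, ∀ b ∈ G, a * b = b * a)
    {As : ℕ → (E k ≃ₗᵢ[ℝ] E k)} {vs : ℕ → E k} {s : ℕ → ℝ} {d : E k}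
    (h1 : ∀ n, aff (As n) (vs n) ∈ G) (h3 : Tendsto s atTop (nhds 0))
    (h5 : Tendsto (fun n => s n • vs n) atTop (nhds d)) (n : ℕ) : As n d = d := by
  have comm : ∀ m, vs n + As n (vs m) = vs m + As m (vs n) := by
    intro m
    have h := habel _ (h1 n) _ (h1 m)
    rw [aff_mul, aff_mul] at h
    exact (aff_injective h).2
  have key : ∀ m, s m • vs m - As n (s m • vs m) = s m • vs n - s m • (As m (vs n)) := by
    intro m
    rw [map_smul, ← smul_sub, ← smul_sub]
    congr 1
    rw [sub_eq_sub_iff_add_eq_add]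
    exact (comm m).symm
  have lhs : Tendsto (fun m => s m • vs m - As n (s m • vs m)) atTop
      (nhds (d - As n d)) :=
    h5.sub (((As n).continuous.tendsto _).comp h5)
  have rhs : Tendsto (fun m => s m • vs n - s m • (As m (vs n))) atTop (nhds 0) := by
    have a1 : Tendsto (fun m => s m • vs n) atTop (nhds 0) := by
      simpa using h3.smul (tendsto_const_nhds (x := vs n))
    have a2 : Tendsto (fun m => s m • (As m (vs n))) atTop (nhds 0) :=
      tendsto_smul_zero_of_bounded h3 (fun m => by rw [(As m).norm_map])
    simpa using a1.sub a2
  have := tendsto_nhds_unique (lhs.congr (fun m => key m)) rhs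
  have h0 : d - As n d = 0 := this
  have := sub_eq_zero.1 h0
  exact this.symm

lemma eigen_decomp (A : E k ≃ₗᵢ[ℝ] E k) (v : E k) :
    ∃ u z : E k, A u = u ∧ A z - z = v - u ∧
      ∀ (s : ℝ) (d : E k), A d = d → ‖s • u - d‖ ≤ ‖s • v - d‖ := by
  classical
  set T : E k →ₗ[ℝ] E k := (A.toLinearEquiv : E k →ₗ[ℝ] E k) - LinearMap.id with hT
  have hTapp : ∀ x, T x = A x - x := fun x => rfl
  set F : Submodule ℝ (E k) := LinearMap.ker T with hF
  have hmemF : ∀ x, x ∈ F ↔ A x = x := by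
    intro x
    rw [hF, LinearMap.mem_ker, hTapp, sub_eq_zero]
  set u : E k := (F.orthogonalProjectionOnto v : E k) with hu
  have huF : A u = u := (hmemF u).1 (F.orthogonalProjectionOnto v).2
  have hrange : LinearMap.range T = Fᗮ := by
    have hle : LinearMap.range T ≤ Fᗮ := by
      rintro y hy
      obtain ⟨z, rfl⟩ := hy
      rw [Submodule.mem_orthogonal]
      intro x hx
      have hAx : A x = x := (hmemF x).1 hx
      rw [hTapp, inner_sub_right]
      have h9 : (inner ℝ x (A z) : ℝ) = inner ℝ (A x) (A z) := by rw [hAx]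
      rw [h9, A.inner_map_map, sub_self]
    have hd1 := LinearMap.finrank_range_add_finrank_ker T
    have hd2 := Submodule.finrank_add_finrank_orthogonal (K := F)
    rw [← hF] at hd1
    exact Submodule.eq_of_le_of_finrank_eq hle (by omega)
  have hVU : v - u ∈ LinearMap.range T := by
    rw [hrange]
    exact F.sub_starProjection_mem_orthogonal v
  obtain ⟨z, hz⟩ := hVU
  refine ⟨u, z, huF, by rw [← hTapp, hz], ?_⟩
  intro s d hd
  have hdF : d ∈ F := (hmemF d).2 hd
  have hPd : (F.orthogonalProjectionOnto d : E k) = d :=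
    F.starProjection_eq_self_iff.2 hdF
  have hsu : s • u - d = (F.orthogonalProjectionOnto (s • v - d) : E k) := by
    rw [map_sub, map_smul, Submodule.coe_sub, SetLike.val_smul, hPd, hu]
  rw [hsu]
  calc ‖(F.orthogonalProjectionOnto (s • v - d) : E k)‖
      = ‖F.orthogonalProjectionOnto (s • v - d)‖ := rfl
    _ ≤ ‖F.orthogonalProjectionOnto‖ * ‖s • v - d‖ := (F.orthogonalProjectionOnto).le_opNorm _
    _ ≤ 1 * ‖s • v - d‖ := by
        gcongr
        exact F.orthogonalProjectionOnto_norm_le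
    _ = ‖s • v - d‖ := one_mul _

noncomputable def Ssum (A : E k ≃ₗᵢ[ℝ] E k) (v : E k) : ℕ → E k
  | 0 => 0
  | (p+1) => Ssum A v p + (A^p) v

lemma aff_pow (A : E k ≃ₗᵢ[ℝ] E k) (v : E k) (p : ℕ) :
    (aff A v)^p = aff (A^p) (Ssum A v p) := by
  induction p with
  | zero => simp [Ssum, aff_one]
  | succ p ih =>
      rw [pow_succ, ih, aff_mul, pow_succ]
      rfl

lemma pow_fix {A : E k ≃ₗᵢ[ℝ] E k} {u : E k} (hu : A u = u) (p : ℕ) : (A^p) u = u := by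
  induction p with
  | zero => simp
  | succ p ih => rw [pow_succ, LinearIsometryEquiv.coe_mul, Function.comp_apply, hu, ih]

lemma Ssum_eq {A : E k ≃ₗᵢ[ℝ] E k} {v u z : E k} (hu : A u = u) (hz : A z - z = v - u)
    (p : ℕ) : Ssum A v p = (p : ℝ) • u + ((A^p) z - z) := by
  induction p with
  | zero => simp [Ssum]
  | succ p ih =>
      rw [Ssum, ih]
      have hv : v = u + (A z - z) := by rw [hz]; abel
      have h1 : (A^p) v = u + ((A^(p+1)) z - (A^p) z) := by
        rw [hv, map_add, map_sub, pow_fix hu]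
        have : (A^p) (A z) = (A^(p+1)) z := by
          rw [pow_succ, LinearIsometryEquiv.coe_mul, Function.comp_apply]
        rw [this]
      rw [h1]
      push_cast
      rw [add_smul, one_smul]
      abel

lemma syndetic (A : E k ≃ₗᵢ[ℝ] E k) {κ : ℝ} (hκ : 0 < κ) :
    ∃ N : ℕ, ∀ x : ℕ, ∃ q : ℕ, x ≤ q ∧ q ≤ x + N ∧
      ∀ y : E k, ‖(A^q) y - y‖ ≤ κ * ‖y‖ := by
  classical
  set Φ : ℕ → (E k →L[ℝ] E k) := fun n => (A^n).toLinearIsometry.toContinuousLinearMap with hΦ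
  have hΦapp : ∀ n y, Φ n y = (A^n) y := fun n y => rfl
  have hbdd : ∀ n, ‖Φ n‖ ≤ 1 := by
    intro n
    refine ContinuousLinearMap.opNorm_le_bound _ zero_le_one (fun y => ?_)
    rw [hΦapp, (A^n).norm_map, one_mul]
  have htb : TotallyBounded (Set.range Φ) := by
    have hsub : Set.range Φ ⊆ Metric.closedBall 0 1 := by
      rintro _ ⟨n, rfl⟩
      rw [Metric.mem_closedBall, dist_zero_right]
      exact hbdd n
    exact (ProperSpace.isCompact_closedBall (0 : E k →L[ℝ] E k) 1).totallyBounded.subset hsub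
  obtain ⟨t, hts, htf, hcov⟩ := EMetric.totallyBounded_iff'.1 htb (ENNReal.ofReal κ)
    (by simpa using hκ)
  have hex : ∀ φ ∈ t, ∃ m, Φ m = φ := fun φ hφ => hts hφ
  choose! m hm using hex
  obtain ⟨N, hN⟩ : ∃ N, ∀ φ ∈ t, m φ ≤ N := by
    have : (m '' t).Finite := htf.image m
    obtain ⟨N, hN⟩ := this.bddAbove
    exact ⟨N, fun φ hφ => hN (Set.mem_image_of_mem m hφ)⟩
  refine ⟨N, fun x => ?_⟩
  have hcx := hcov (Set.mem_range_self (f := Φ) (x + N))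
  rw [Set.mem_iUnion₂] at hcx
  obtain ⟨φ, hφt, hφb⟩ := hcx
  rw [EMetric.mem_ball] at hφb
  have hφb' : dist (Φ (x + N)) φ < κ := edist_lt_ofReal.1 hφb
  set mm := m φ with hmm
  have hmmN : mm ≤ N := hN φ hφt
  refine ⟨x + N - mm, by omega, by omega, fun y => ?_⟩
  have hsum : mm + (x + N - mm) = x + N := by omega
  have key : ‖(A^(x+N-mm)) y - y‖ = ‖(A^(x+N)) y - (A^mm) y‖ := by
    rw [← (A^mm).norm_map ((A^(x+N-mm)) y - y), map_sub]
    have h7 : (A^mm) ((A^(x+N-mm)) y) = (A^(x+N)) y := by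
      rw [show (A^mm) ((A^(x+N-mm)) y) = ((A^mm) * (A^(x+N-mm))) y from rfl, ← pow_add, hsum]
    rw [h7]
  rw [key]
  have : (A^(x+N)) y - (A^mm) y = (Φ (x+N) - Φ mm) y := by
    simp [hΦapp]
  rw [this]
  calc ‖(Φ (x+N) - Φ mm) y‖ ≤ ‖Φ (x+N) - Φ mm‖ * ‖y‖ :=
        (Φ (x+N) - Φ mm).le_opNorm y
    _ ≤ κ * ‖y‖ := by
        gcongr
        rw [← dist_eq_norm, hm φ hφt]
        exact hφb'.le

end St14
end S4

section S5
open Filter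
namespace St14
variable {k : ℕ} {G : Subgroup (E k ≃ᵢ E k)}

lemma W_pair {A B : E k ≃ₗᵢ[ℝ] E k} {v w u z u' z' : E k}
    (hAv : aff A v ∈ G) (hBw : aff B w ∈ G) (hu : A u = u) (hz : A z - z = v - u)
    (hu' : B u' = u') (hz' : B z' - z' = w - u') {s t : ℝ} (hs : 0 < s) (ht : 0 < t) :
    W G 1 (s • u + t • u') := by
  have hstep : ∀ j : ℕ, ∃ p q : ℕ,
      (j:ℝ) + 1 ≤ p ∧
      (∀ y, ‖(A^p) y - y‖ ≤ 1/((j:ℝ)+1) * ‖y‖) ∧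
      (∀ y, ‖(B^q) y - y‖ ≤ 1/((j:ℝ)+1) * ‖y‖) ∧
      |s / p * q - t| ≤ 1/((j:ℝ)+1) := by
    intro j
    have hκ : (0:ℝ) < 1/((j:ℝ)+1) := by positivity
    obtain ⟨NB, hNB⟩ := syndetic B hκ
    obtain ⟨NA, hNA⟩ := syndetic A hκ
    set X : ℕ := max (j+1) (Nat.ceil (((j:ℝ)+1) * s * ((NB:ℝ)+2))) with hX
    obtain ⟨p, hp1, _, hpA⟩ := hNA X
    have hpj : (j:ℝ) + 1 ≤ p := by
      have h8 : j + 1 ≤ X := le_max_left _ _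
      exact_mod_cast le_trans h8 hp1
    have hp0 : (0:ℝ) < p := by
      have h7 : (0:ℝ) < (j:ℝ) + 1 := by positivity
      linarith
    have hpX : ((j:ℝ)+1) * s * ((NB:ℝ)+2) ≤ p := by
      have h8 : Nat.ceil (((j:ℝ)+1) * s * ((NB:ℝ)+2)) ≤ X := le_max_right _ _
      have h9 : (Nat.ceil (((j:ℝ)+1) * s * ((NB:ℝ)+2)) : ℝ) ≤ p := by
        exact_mod_cast le_trans h8 hp1
      exact le_trans (Nat.le_ceil _) h9
    obtain ⟨q, hq1, hq2, hqB⟩ := hNB (Nat.ceil ((p:ℝ) * t / s))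
    refine ⟨p, q, hpj, hpA, hqB, ?_⟩
    set P : ℝ := (p:ℝ) with hP
    have hq1' : P * t / s ≤ q :=
      le_trans (Nat.le_ceil _) (by exact_mod_cast hq1)
    have hq2' : (q:ℝ) ≤ P * t / s + 1 + NB := by
      have h8 : (q:ℝ) ≤ (Nat.ceil (P*t/s) : ℝ) + NB := by exact_mod_cast hq2
      have h9 : (Nat.ceil (P*t/s) : ℝ) < P*t/s + 1 :=
        Nat.ceil_lt_add_one (by positivity)
      linarith
    have h9 : s * (P * t / s) = P * t := by field_simp
    have key1 : P * t ≤ s * q := by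
      have h8 := mul_le_mul_of_nonneg_left hq1' hs.le
      rw [h9] at h8
      exact h8
    have key2 : s * q ≤ P * t + s * (1 + NB) := by
      have h8 := mul_le_mul_of_nonneg_left hq2' hs.le
      calc s * q ≤ s * (P*t/s + 1 + NB) := h8
        _ = s * (P*t/s) + s * (1 + NB) := by ring
        _ = P * t + s * (1 + NB) := by rw [h9]
    have heq : s / P * q - t = (s * q - t * P)/P := by field_simp
    rw [heq, abs_of_nonneg (div_nonneg (by linarith) hp0.le)]
    have hb1 : (s * q - t * P)/P ≤ (s * (1+NB))/P := by
      gcongr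
      linarith
    have hb2 : (s * (1+NB))/P ≤ 1/((j:ℝ)+1) := by
      rw [div_le_div_iff₀ hp0 (by positivity)]
      nlinarith [hpX, hs.le]
    linarith
  choose p q hpge hA hB hq using hstep
  set lam : ℕ → ℝ := fun j => s / (p j) with hlam
  have hp0 : ∀ j, (0:ℝ) < p j := by
    intro j
    have h7 : (0:ℝ) < (j:ℝ) + 1 := by positivity
    linarith [hpge j]
  have hlam0 : ∀ j, 0 < lam j := fun j => div_pos hs (hp0 j)
  have hlamp : ∀ j, lam j * (p j : ℝ) = s := fun j => div_mul_cancel₀ s (ne_of_gt (hp0 j))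
  have hlamtendsto : Tendsto lam atTop (nhds 0) := by
    apply squeeze_zero' (Eventually.of_forall fun j => (hlam0 j).le)
      (g := fun j : ℕ => s * (1/((j:ℝ)+1)))
    · refine Eventually.of_forall fun j => ?_
      rw [mul_one_div]
      show s / (p j) ≤ s / ((j:ℝ)+1)
      rw [div_le_div_iff₀ (hp0 j) (by positivity)]
      nlinarith [hpge j, hs.le]
    · simpa using one_div_nat_tendsto.const_mul s
  refine ⟨lam, fun j => (B^(q j)).trans (A^(p j)),
    fun j => Ssum A v (p j) + (A^(p j)) (Ssum B w (q j)), fun j => ?_, hlam0,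
    hlamtendsto, fun x => ?_, ?_⟩
  · rw [← aff_mul, ← aff_pow, ← aff_pow]
    exact G.mul_mem (pow_mem hAv (p j)) (pow_mem hBw (q j))
  · -- linear part tends to the identity
    have hone : (1 : E k ≃ₗᵢ[ℝ] E k) x = x := rfl
    rw [hone, tendsto_iff_norm_sub_tendsto_zero]
    refine squeeze_zero' (Eventually.of_forall fun j => norm_nonneg _)
      (g := fun j : ℕ => 1/((j:ℝ)+1) * (2 * ‖x‖))
      (Eventually.of_forall fun j => ?_)
      (by simpa [mul_comm] using one_div_nat_tendsto.mul_const (2 * ‖x‖))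
    calc ‖((B^(q j)).trans (A^(p j))) x - x‖
          = ‖(A^(p j)) ((B^(q j)) x) - x‖ := rfl
        _ ≤ ‖(A^(p j)) ((B^(q j)) x) - (B^(q j)) x‖ + ‖(B^(q j)) x - x‖ :=
            norm_sub_le_norm_sub_add_norm_sub _ _ _
        _ ≤ 1/((j:ℝ)+1) * ‖(B^(q j)) x‖ + 1/((j:ℝ)+1) * ‖x‖ :=
            add_le_add (hA j _) (hB j x)
        _ = 1/((j:ℝ)+1) * (2 * ‖x‖) := by rw [(B^(q j)).norm_map]; ring
  · -- translation part
    have hlq : Tendsto (fun j => lam j * q j) atTop (nhds t) := by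
      rw [tendsto_iff_norm_sub_tendsto_zero]
      refine squeeze_zero' (Eventually.of_forall fun j => norm_nonneg _)
        (g := fun j : ℕ => 1/((j:ℝ)+1))
        (Eventually.of_forall fun j => ?_) one_div_nat_tendsto
      rw [Real.norm_eq_abs]
      exact hq j
    have hAu' : Tendsto (fun j => (A^(p j)) u') atTop (nhds u') := by
      rw [tendsto_iff_norm_sub_tendsto_zero]
      exact squeeze_zero' (Eventually.of_forall fun j => norm_nonneg _)
        (g := fun j : ℕ => 1/((j:ℝ)+1) * ‖u'‖)
        (Eventually.of_forall fun j => hA j u')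
        (by simpa [mul_comm] using one_div_nat_tendsto.mul_const ‖u'‖)
    have hT2 : Tendsto (fun j => (lam j * q j) • ((A^(p j)) u')) atTop (nhds (t • u')) :=
      hlq.smul hAu'
    have hT3 : Tendsto (fun j => lam j • ((A^(p j)) z - z)) atTop (nhds 0) := by
      apply tendsto_smul_zero_of_bounded hlamtendsto (C := 2*‖z‖)
      intro j
      calc ‖(A^(p j)) z - z‖ ≤ ‖(A^(p j)) z‖ + ‖z‖ := norm_sub_le _ _
        _ ≤ 2*‖z‖ := by rw [(A^(p j)).norm_map]; linarith
    have hT4 : Tendsto (fun j => lam j • ((A^(p j)) ((B^(q j)) z' - z'))) atTop (nhds 0) := by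
      apply tendsto_smul_zero_of_bounded hlamtendsto (C := 2*‖z'‖)
      intro j
      rw [(A^(p j)).norm_map]
      calc ‖(B^(q j)) z' - z'‖ ≤ ‖(B^(q j)) z'‖ + ‖z'‖ := norm_sub_le _ _
        _ ≤ 2*‖z'‖ := by rw [(B^(q j)).norm_map]; linarith
    have hdecomp : ∀ j, lam j • (Ssum A v (p j) + (A^(p j)) (Ssum B w (q j)))
        = s • u + ((lam j * q j) • ((A^(p j)) u')
          + (lam j • ((A^(p j)) z - z) + lam j • ((A^(p j)) ((B^(q j)) z' - z')))) := by
      intro j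
      rw [Ssum_eq hu hz (p j), Ssum_eq hu' hz' (q j), map_add, map_smul,
        smul_add, smul_add, smul_add, smul_smul, smul_smul, hlamp j]
      abel
    have hfinal := (tendsto_const_nhds (x := s • u)).add (hT2.add (hT3.add hT4))
    have hfinal' := hfinal.congr (fun j => (hdecomp j).symm)
    simpa using hfinal'
end St14
end S5

section S6
open Filter
namespace St14
variable {k : ℕ} {G : Subgroup (E k ≃ᵢ E k)}

lemma Wadd (habel : ∀ a ∈ G, ∀ b ∈ G, a * b = b * a) {d₁ d₂ : E k}
    (h₁ : W G 1 d₁) (h₂ : W G 1 d₂) : W G 1 (d₁ + d₂) := by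
  obtain ⟨s, As, vs, a1, a2, a3, a4, a5⟩ := h₁
  obtain ⟨t, Bs, ws, b1, b2, b3, b4, b5⟩ := h₂
  have hfix1 : ∀ n, As n d₁ = d₁ := fun n => eigenfix habel a1 a3 a5 n
  have hfix2 : ∀ m, Bs m d₂ = d₂ := fun m => eigenfix habel b1 b3 b5 m
  choose u z hu hz hb using fun n => eigen_decomp (As n) (vs n)
  choose u' z' hu' hz' hb' using fun m => eigen_decomp (Bs m) (ws m)
  have hcore : ∀ n m, W G 1 (s n • u n + t m • u' m) := fun n m =>
    W_pair (a1 n) (b1 m) (hu n) (hz n) (hu' m) (hz' m) (a2 n) (b2 m)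
  have hsu : Tendsto (fun n => s n • u n) atTop (nhds d₁) := by
    rw [tendsto_iff_norm_sub_tendsto_zero]
    exact squeeze_zero' (Eventually.of_forall fun n => norm_nonneg _)
      (Eventually.of_forall fun n => hb n (s n) d₁ (hfix1 n))
      (tendsto_iff_norm_sub_tendsto_zero.1 a5)
  have htu : Tendsto (fun m => t m • u' m) atTop (nhds d₂) := by
    rw [tendsto_iff_norm_sub_tendsto_zero]
    exact squeeze_zero' (Eventually.of_forall fun m => norm_nonneg _)
      (Eventually.of_forall fun m => hb' m (t m) d₂ (hfix2 m))
      (tendsto_iff_norm_sub_tendsto_zero.1 b5)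
  have hstep : ∀ m, W G 1 (d₁ + t m • u' m) := fun m =>
    W.closed (Ls := fun _ => 1) (cs := fun n => s n • u n + t m • u' m)
      (fun n => hcore n m) (fun x => tendsto_const_nhds) (hsu.add tendsto_const_nhds)
  exact W.closed (Ls := fun _ => 1) (cs := fun m => d₁ + t m • u' m) hstep
    (fun x => tendsto_const_nhds) (tendsto_const_nhds.add htu)

lemma const_mem_ginf {A : E k ≃ₗᵢ[ℝ] E k} {v : E k} (h : aff A v ∈ G) :
    aff A 0 ∈ Ginf G := by
  refine (ginf_iff.2 ⟨fun n => 1/((n:ℝ)+1), fun _ => A, fun _ => v, fun _ => h,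
    fun n => by positivity, one_div_nat_tendsto, fun x => tendsto_const_nhds, ?_⟩)
  exact tendsto_smul_zero_of_bounded one_div_nat_tendsto (C := ‖v‖) (fun n => le_refl _)

end St14
end S6


open Filter St14 in
/-- for a closed abelian subgroup `G ≤ Isom(ℝ^k)`, the blow-down set
`G_∞` is a closed subgroup of `Isom(ℝ^k)` containing the isotropy group `Iso₀G`, and
if `G` fails property (P) then `Iso₀G` is a proper subgroup of `Iso₀G_∞`. -/
theorem stmt14 {k : ℕ} (G : Subgroup (E k ≃ᵢ E k))
    (hclosed : IsClosed (G : Set (E k ≃ᵢ E k)))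
    (hform : ∀ g ∈ G, ∃ (A : E k ≃ₗᵢ[ℝ] E k) (v : E k), g = aff A v)
    (habel : ∀ a ∈ G, ∀ b ∈ G, a * b = b * a) :
    (∃ Gi : Subgroup (E k ≃ᵢ E k), (Gi : Set (E k ≃ᵢ E k)) = Ginf G) ∧
    IsClosed (Ginf G) ∧
    {g : E k ≃ᵢ E k | g ∈ G ∧ g (0 : E k) = 0} ⊆ Ginf G ∧
    ((¬ ∀ (A : E k ≃ₗᵢ[ℝ] E k) (v : E k), aff A v ∈ G → aff A 0 ∈ G) →
      {g : E k ≃ᵢ E k | g ∈ G ∧ g (0 : E k) = 0}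
        ⊂ {g : E k ≃ᵢ E k | g ∈ Ginf G ∧ g (0 : E k) = 0}) := by
  have hsub : {g : E k ≃ᵢ E k | g ∈ G ∧ g (0 : E k) = 0} ⊆ Ginf G := by
    rintro g ⟨hg, hg0⟩
    obtain ⟨A, v, rfl⟩ := hform g hg
    have hv : v = 0 := by simpa using hg0
    subst hv
    exact const_mem_ginf hg
  refine ⟨?_, isClosed_Ginf, hsub, ?_⟩
  · refine ⟨{ carrier := Ginf G, mul_mem' := ?_, one_mem' := ?_, inv_mem' := ?_ }, rfl⟩
    · intro a b ha hb
      obtain ⟨La, ca, rfl⟩ := exists_aff a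
      obtain ⟨Lb, cb, rfl⟩ := exists_aff b
      rw [aff_mul]
      exact (W.mul (fun _ _ => Wadd habel) (ginf_iff.1 ha) (ginf_iff.1 hb)).ginf
    · rw [show (1 : E k ≃ᵢ E k) = aff 1 0 from aff_one]
      exact W_one.ginf
    · intro a ha
      obtain ⟨La, ca, rfl⟩ := exists_aff a
      rw [aff_inv]
      exact ((ginf_iff.1 ha).inv).ginf
  · intro hP
    push_neg at hP
    obtain ⟨A, v, hAv, hA0⟩ := hP
    have hsub2 : {g : E k ≃ᵢ E k | g ∈ G ∧ g (0:E k) = 0}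
        ⊆ {g : E k ≃ᵢ E k | g ∈ Ginf G ∧ g (0:E k) = 0} := by
      rintro g ⟨hg, hg0⟩
      exact ⟨hsub ⟨hg, hg0⟩, hg0⟩
    rw [Set.ssubset_iff_of_subset hsub2]
    refine ⟨aff A 0, ⟨const_mem_ginf hAv, by simp⟩, ?_⟩
    rintro ⟨hmem, -⟩
    exact hA0 hmem
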